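/- Let 𝒯 = (T₁,…,Tₙ) be an (r,ε)-invariant tile set in which every tile has size at least r, and let Q be a 𝒯-quasi-tiling shift. Let Q_p be the shift of all quasi-tilings obtained from elements of Q by deleting some (possibly no) tile-translates. Then h(Q_p) ≤ h(Q) + (2/r)·log(3r). -/

import Mathlib

open Pointwise Filter

/-- Projections of `X ⊆ A^G` to a finite set. -/
def proj {G A : Type*} (X : Set (G → A)) (K : Finset G) : Set (K → A) :=
  {f | ∃ x ∈ X, ∀ k : K, f k = x k}

/-- Disjoint quasi-tilings for a tile set. -/
def IsQT {G : Type*} [Group G] (𝒯 : Finset (Finset G)) (T : G → Finset G) : Prop :=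
  (∀ g, T g ∈ 𝒯 ∨ T g = ∅) ∧
  ∀ g h : G, g ≠ h → Disjoint (g • ((T g : Finset G) : Set G)) (h • ((T h : Finset G) : Set G))

/-- The word-metric ball of radius `r`. -/
def ball {G : Type*} [Group G] [DecidableEq G] (gen : Finset G) (r : ℕ) : Finset G :=
  (insert (1 : G) (gen ∪ gen⁻¹)) ^ r

/-- The `r`-boundary of a set `F ⊆ G`. -/
def bdry {G : Type*} [Group G] [DecidableEq G] (gen : Finset G) (r : ℕ) (F : Set G) : Set G :=
  {g | (∃ b ∈ ball gen r, g * b ∈ F) ∧ (∃ b ∈ ball gen r, g * b ∉ F)}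

/-- The `r`-boundary ratio. -/
noncomputable def rho {G : Type*} [Group G] [DecidableEq G]
    (gen : Finset G) (r : ℕ) (F : Finset G) : ℝ :=
  ((bdry gen r (F : Set G)).ncard : ℝ) / F.card

/-- `Q_p`: quasi-tilings obtained from elements of `Q` by deleting some tile-translates. -/
def Qp {G : Type*} (Q : Set (G → Finset G)) : Set (G → Finset G) :=
  {T' | ∃ T ∈ Q, ∀ g, T' g = T g ∨ T' g = ∅}

section Helpers
variable {G : Type*}

lemma one_mem_ball [Group G] [DecidableEq G] (gen : Finset G) (r : ℕ) :
    (1 : G) ∈ ball gen r := by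
  induction r with
  | zero => simp [ball]
  | succ n ih =>
    have : (1:G) * 1 ∈ (insert (1 : G) (gen ∪ gen⁻¹))^n * (insert (1 : G) (gen ∪ gen⁻¹)) :=
      Finset.mul_mem_mul ih (Finset.mem_insert_self _ _)
    simpa [ball, pow_succ] using this

lemma ball_inv [Group G] [DecidableEq G] (gen : Finset G) (r : ℕ) :
    (ball gen r)⁻¹ = ball gen r := by
  have hS : (insert (1 : G) (gen ∪ gen⁻¹))⁻¹ = insert (1 : G) (gen ∪ gen⁻¹) := by
    ext x
    simp only [Finset.mem_inv', Finset.mem_insert, Finset.mem_union, inv_eq_one]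
    constructor
    · rintro (h | h | h)
      · exact Or.inl h
      · exact Or.inr (Or.inr (by simpa [Finset.mem_inv'] using h))
      · exact Or.inr (Or.inl (by simpa [Finset.mem_inv'] using h))
    · rintro (h | h | h)
      · exact Or.inl h
      · exact Or.inr (Or.inr (by simpa [Finset.mem_inv'] using h))
      · exact Or.inr (Or.inl (by simpa [Finset.mem_inv'] using h))
  rw [ball, ← hS, ← inv_pow, inv_inv, hS]

lemma ball_mono [Group G] [DecidableEq G] (gen : Finset G) {n m : ℕ}
    (h : n ≤ m) : ball gen n ⊆ ball gen m := by
  obtain ⟨k, rfl⟩ := Nat.exists_eq_add_of_le h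
  intro x hx
  have : x * 1 ∈ (insert (1 : G) (gen ∪ gen⁻¹))^n * (insert (1 : G) (gen ∪ gen⁻¹))^k :=
    Finset.mul_mem_mul hx (one_mem_ball gen k)
  simpa [ball, pow_add] using this

lemma exists_ball [Group G] [DecidableEq G] (gen : Finset G)
    (hgen : Subgroup.closure (gen : Set G) = ⊤) (g : G) : ∃ n, g ∈ ball gen n := by
  have hg : g ∈ Subgroup.closure (gen : Set G) := hgen ▸ Subgroup.mem_top g
  induction hg using Subgroup.closure_induction with
  | mem x hx =>
    refine ⟨1, by simp only [ball, pow_one]; exact Finset.mem_insert_of_mem (Finset.mem_union_left _ hx)⟩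
  | one => exact ⟨0, by simp [ball]⟩
  | mul x y hx hy ihx ihy =>
    obtain ⟨n, hn⟩ := ihx; obtain ⟨m, hm⟩ := ihy
    exact ⟨n + m, by simpa [ball, pow_add] using Finset.mul_mem_mul hn hm⟩
  | inv x hx ih =>
    obtain ⟨n, hn⟩ := ih
    exact ⟨n, by rw [← ball_inv]; simpa using hn⟩

lemma finset_subset_ball [Group G] [DecidableEq G] (gen : Finset G)
    (hgen : Subgroup.closure (gen : Set G) = ⊤) (B : Finset G) :
    ∃ R, B ⊆ ball gen R := by
  induction B using Finset.induction with
  | empty => exact ⟨0, by simp⟩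
  | @insert a s _ ih =>
    obtain ⟨R, hR⟩ := ih
    obtain ⟨n, hn⟩ := exists_ball gen hgen a
    exact ⟨max n R, Finset.insert_subset (ball_mono gen (le_max_left _ _) hn)
      (hR.trans (ball_mono gen (le_max_right _ _)))⟩

lemma proj_finite (𝒯 : Finset (Finset G)) (X : Set (G → Finset G))
    (hX : ∀ x ∈ X, ∀ g, x g ∈ 𝒯 ∨ x g = ∅) (K : Finset G) : (proj X K).Finite := by
  classical
  have hsub : proj X K ⊆ Set.pi Set.univ (fun _ : K => ((insert ∅ 𝒯 : Finset (Finset G)) : Set (Finset G))) := by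
    rintro f ⟨x, hx, hf⟩ k _
    rcases hX x hx k with h | h <;> simp [hf k, h]
  exact (Set.Finite.pi (fun _ => (insert ∅ 𝒯 : Finset (Finset G)).finite_toSet)).subset hsub

lemma count_lemma [DecidableEq G] (𝒯 : Finset (Finset G)) (Q : Set (G → Finset G))
    (hQT : ∀ T ∈ Q, ∀ g, T g ∈ 𝒯 ∨ T g = ∅) (F : Finset G) (m : ℕ)
    (hm : ∀ T ∈ Q, (F.filter fun g => T g ≠ ∅).card ≤ m) :
    (proj (Qp Q) F).ncard ≤ (proj Q F).ncard * 2 ^ m := by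
  classical
  have hfin : (proj Q F).Finite := proj_finite 𝒯 Q hQT F
  set s := hfin.toFinset with hs
  set del : (F → Finset G) → Finset F → (F → Finset G) :=
    fun f S k => if k ∈ S then ∅ else f k with hdel
  set ctr : (F → Finset G) → Finset F :=
    fun f => Finset.univ.filter (fun k => f k ≠ ∅) with hctr
  have hsub : proj (Qp Q) F ⊆ ↑(s.biUnion (fun f => ((ctr f).powerset.image (del f)))) := by
    rintro f' ⟨x, ⟨T, hTQ, hxT⟩, hf'⟩
    have hfP : (fun k : F => T k) ∈ proj Q F := ⟨T, hTQ, fun _ => rfl⟩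
    simp only [Finset.coe_biUnion, Set.mem_iUnion, Finset.mem_coe, Finset.mem_image,
      Finset.mem_powerset, hs, Set.Finite.mem_toFinset]
    refine ⟨fun k : F => T k, hfP, (ctr (fun k : F => T k)).filter (fun k => f' k = ∅),
      Finset.filter_subset _ _, ?_⟩
    funext k
    by_cases h : f' k = ∅
    · by_cases h2 : T (k : G) = ∅
      · simp [hdel, hctr, h, h2]
      · simp [hdel, hctr, h, h2]
    · have hx' : f' k = x k := hf' k
      have : f' k = T k := by
        rcases hxT k with h2 | h2
        · rw [hx', h2]
        · exact absurd (hx'.trans h2) h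
      simp [hdel, hctr, h, this]
  have h1 := Set.ncard_le_ncard hsub (Finset.finite_toSet _)
  rw [Set.ncard_coe_finset] at h1
  refine h1.trans ?_
  calc (s.biUnion fun f => (ctr f).powerset.image (del f)).card
      ≤ ∑ f ∈ s, ((ctr f).powerset.image (del f)).card := Finset.card_biUnion_le
    _ ≤ ∑ _f ∈ s, 2 ^ m := by
        refine Finset.sum_le_sum (fun f hf => ?_)
        refine (Finset.card_image_le).trans ?_
        rw [Finset.card_powerset]
        refine Nat.pow_le_pow_right (by norm_num) ?_
        obtain ⟨T, hTQ, hfT⟩ := (Set.Finite.mem_toFinset hfin).mp hf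
        refine le_trans ?_ (hm T hTQ)
        refine Finset.card_le_card_of_injOn (fun k => (k : G)) ?_ ?_
        · intro k hk
          simp only [hctr, Finset.mem_filter, Finset.mem_univ, true_and] at hk
          simp only [Finset.mem_filter]
          exact Finset.mem_filter.mpr ⟨k.2, by rw [← hfT k]; simpa using hk⟩
        · exact fun a _ b _ h => Subtype.ext h
    _ = s.card * 2 ^ m := by rw [Finset.sum_const, smul_eq_mul]
    _ = (proj Q F).ncard * 2 ^ m := by
        rw [← Set.ncard_coe_finset s, hs, Set.Finite.coe_toFinset]

lemma centers_bound [Group G] [DecidableEq G] (𝒯 : Finset (Finset G)) {r : ℕ}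
    (hsize : ∀ t ∈ 𝒯, r ≤ t.card) {T : G → Finset G} (hT : IsQT 𝒯 T)
    (F B : Finset G) (hB : ∀ t ∈ 𝒯, t ⊆ B) :
    r * (F.filter fun g => T g ≠ ∅).card ≤ (F * B).card := by
  classical
  set C := F.filter fun g => T g ≠ ∅ with hC
  have hdisj : ∀ g ∈ C, ∀ h ∈ C, g ≠ h → Disjoint (g • T g) (h • T h) := by
    intro g _ h _ hgh
    rw [← Finset.disjoint_coe]
    simpa [Finset.coe_smul_finset] using hT.2 g h hgh
  have hsubset : C.biUnion (fun g => g • T g) ⊆ F * B := by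
    intro x hx
    simp only [Finset.mem_biUnion] at hx
    obtain ⟨g, hg, hx⟩ := hx
    obtain ⟨b, hb, rfl⟩ := Finset.mem_smul_finset.mp hx
    have hgF : g ∈ F := (Finset.mem_filter.mp hg).1
    have hTg : T g ∈ 𝒯 := (hT.1 g).resolve_right (Finset.mem_filter.mp hg).2
    simpa [smul_eq_mul] using Finset.mul_mem_mul hgF (hB _ hTg hb)
  calc r * C.card = ∑ _g ∈ C, r := by rw [Finset.sum_const, smul_eq_mul, mul_comm]
    _ ≤ ∑ g ∈ C, (g • T g).card := Finset.sum_le_sum (fun g hg => by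
        rw [Finset.card_smul_finset]
        exact hsize _ ((hT.1 g).resolve_right (Finset.mem_filter.mp hg).2))
    _ = (C.biUnion fun g => g • T g).card := (Finset.card_biUnion hdisj).symm
    _ ≤ (F * B).card := Finset.card_le_card hsubset

lemma mul_card_bound [Group G] [DecidableEq G] (gen : Finset G) (R : ℕ)
    (F B : Finset G) (hBR : B ⊆ ball gen R) :
    (F * B).card ≤ F.card + (bdry gen R (F : Set G)).ncard := by
  classical
  have hbfin : (bdry gen R (F : Set G)).Finite := by
    apply (Finset.finite_toSet (F * (ball gen R)⁻¹)).subset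
    rintro g ⟨⟨b, hb, hgb⟩, -⟩
    have hg : g = (g * b) * b⁻¹ := by group
    rw [hg]
    exact Finset.mem_coe.mpr (Finset.mul_mem_mul hgb (Finset.inv_mem_inv hb))
  have hsub : (↑(F * B) : Set G) ⊆ ↑F ∪ bdry gen R (F : Set G) := by
    intro x hx
    by_cases hxF : x ∈ F
    · exact Or.inl hxF
    · refine Or.inr ⟨?_, ⟨1, one_mem_ball gen R, by simpa using hxF⟩⟩
      obtain ⟨f, hf, b, hb, rfl⟩ := Finset.mem_mul.mp (Finset.mem_coe.mp hx)
      refine ⟨b⁻¹, ?_, by simpa using hf⟩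
      rw [← ball_inv]
      exact Finset.inv_mem_inv (hBR hb)
  calc (F * B).card = (↑(F * B) : Set G).ncard := (Set.ncard_coe_finset _).symm
    _ ≤ ((↑F : Set G) ∪ bdry gen R (F : Set G)).ncard :=
        Set.ncard_le_ncard hsub ((F.finite_toSet).union hbfin)
    _ ≤ (↑F : Set G).ncard + (bdry gen R (F : Set G)).ncard := Set.ncard_union_le _ _
    _ = F.card + (bdry gen R (F : Set G)).ncard := by rw [Set.ncard_coe_finset]

end Helpers

/-- if `𝒯` is `(r,ε)`-invariant (so each tile has size at least `r`) and
`Q` is a `𝒯`-quasi-tiling shift, then `h(Q_p) ≤ h(Q) + (2/r) log(3r)`. -/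
theorem stmt_14 {G : Type*} [Group G] [DecidableEq G]
    (gen : Finset G) (hgen : Subgroup.closure (gen : Set G) = ⊤)
    (𝒯 : Finset (Finset G)) (h1 : ∀ t ∈ 𝒯, (1 : G) ∈ t)
    (r : ℕ) (hr : 0 < r) (ε : ℝ)
    (hinv : ∀ t ∈ 𝒯, ((bdry gen r (t : Set G)).ncard : ℝ) ≤ ε * t.card)
    (hsize : ∀ t ∈ 𝒯, r ≤ t.card)
    (Q : Set (G → Finset G)) (hQT : ∀ T ∈ Q, IsQT 𝒯 T)
    (hQinv : ∀ (g : G), ∀ T ∈ Q, (fun h => T (g⁻¹ * h)) ∈ Q)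
    (hQcl : @IsClosed (G → Finset G)
      (@Pi.topologicalSpace G (fun _ => Finset G) (fun _ => ⊥)) Q)
    (Fn : ℕ → Finset G) (hFne : ∀ n, (Fn n).Nonempty)
    (hFol : ∀ R : ℕ, Tendsto (fun n => rho gen R (Fn n)) atTop (nhds 0))
    (hq hqp : ℝ)
    (hqlim : Tendsto (fun n => Real.log ((proj Q (Fn n)).ncard) / (Fn n).card)
      atTop (nhds hq))
    (hqplim : Tendsto (fun n => Real.log ((proj (Qp Q) (Fn n)).ncard) / (Fn n).card)
      atTop (nhds hqp)) :
    hqp ≤ hq + (2 / r) * Real.log (3 * r) := by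
  classical
  have hr1 : (1:ℝ) ≤ (r:ℝ) := by exact_mod_cast hr
  have hrpos : (0:ℝ) < (r:ℝ) := by exact_mod_cast hr
  have hlog3r : (0:ℝ) ≤ Real.log (3 * r) := Real.log_nonneg (by nlinarith)
  rcases Set.eq_empty_or_nonempty Q with hQe | ⟨T₀, hT₀⟩
  · subst hQe
    have hQpe : Qp (∅ : Set (G → Finset G)) = ∅ := by
      ext x; simp [Qp]
    have hproj : ∀ K : Finset G, proj (∅ : Set (G → Finset G)) K = ∅ := by
      intro K; ext f; simp [proj]
    have h0 : hq = 0 := by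
      refine tendsto_nhds_unique hqlim ?_
      have : (fun n => Real.log ((proj (∅ : Set (G → Finset G)) (Fn n)).ncard) / (Fn n).card)
          = fun _ => (0:ℝ) := by
        funext n; rw [hproj]; simp
      rw [this]; exact tendsto_const_nhds
    have h0' : hqp = 0 := by
      refine tendsto_nhds_unique hqplim ?_
      have : (fun n => Real.log ((proj (Qp (∅ : Set (G → Finset G))) (Fn n)).ncard) / (Fn n).card)
          = fun _ => (0:ℝ) := by
        funext n; rw [hQpe, hproj]; simp
      rw [this]; exact tendsto_const_nhds
    rw [h0, h0']
    have : (0:ℝ) ≤ 2 / r * Real.log (3 * r) := by positivity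
    linarith
  · set B : Finset G := insert 1 (𝒯.sup id) with hB
    obtain ⟨R, hR⟩ := finset_subset_ball gen hgen B
    have hBt : ∀ t ∈ 𝒯, t ⊆ B := fun t ht =>
      (Finset.le_sup (f := id) ht).trans (Finset.subset_insert _ _)
    have key : ∀ n, Real.log ((proj (Qp Q) (Fn n)).ncard) / (Fn n).card ≤
        Real.log ((proj Q (Fn n)).ncard) / (Fn n).card +
          ((1 + rho gen R (Fn n)) / r) * Real.log 2 := by
      intro n
      set F := Fn n with hF
      have hFpos : (0:ℝ) < (F.card : ℝ) := by exact_mod_cast (hFne n).card_pos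
      set mn := (F * B).card / r with hmn
      have hmbound : ∀ T ∈ Q, (F.filter fun g => T g ≠ ∅).card ≤ mn := by
        intro T hT
        rw [hmn, Nat.le_div_iff_mul_le hr, mul_comm]
        exact centers_bound 𝒯 hsize (hQT T hT) F B hBt
      have hcount := count_lemma 𝒯 Q (fun T hT => (hQT T hT).1) F mn hmbound
      have hC1 : 1 ≤ (proj Q F).ncard := by
        have hne : (proj Q F).Nonempty := ⟨fun k => T₀ k, T₀, hT₀, fun _ => rfl⟩
        exact (Set.ncard_pos (proj_finite 𝒯 Q (fun T hT => (hQT T hT).1) F)).mpr hne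
      have hCpos : (0:ℝ) < ((proj Q F).ncard : ℝ) := by exact_mod_cast hC1
      have hlog : Real.log ((proj (Qp Q) F).ncard) ≤
          Real.log ((proj Q F).ncard) + mn * Real.log 2 := by
        have hrhs : Real.log (((proj Q F).ncard : ℝ) * 2 ^ mn) =
            Real.log ((proj Q F).ncard) + mn * Real.log 2 := by
          rw [Real.log_mul (ne_of_gt hCpos) (by positivity), Real.log_pow]
        by_cases hz : (proj (Qp Q) F).ncard = 0
        · rw [hz]
          simp only [Nat.cast_zero, Real.log_zero]
          have hlC : (0:ℝ) ≤ Real.log ((proj Q F).ncard) :=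
            Real.log_nonneg (by exact_mod_cast hC1)
          have hm2 : (0:ℝ) ≤ (mn:ℝ) * Real.log 2 := by
            have := Real.log_nonneg (by norm_num : (1:ℝ) ≤ 2)
            positivity
          linarith
        · have hpos : (0:ℝ) < ((proj (Qp Q) F).ncard : ℝ) := by
            exact_mod_cast Nat.pos_of_ne_zero hz
          calc Real.log ((proj (Qp Q) F).ncard)
              ≤ Real.log (((proj Q F).ncard : ℝ) * 2 ^ mn) :=
                Real.log_le_log hpos (by exact_mod_cast hcount)
            _ = _ := hrhs
      have hmF : (mn : ℝ) / F.card ≤ (1 + rho gen R F) / r := by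
        have h1 : (mn:ℝ) ≤ ((F * B).card : ℝ) / r := Nat.cast_div_le
        have h2 : ((F * B).card : ℝ) ≤ (F.card : ℝ) + ((bdry gen R (F : Set G)).ncard : ℝ) := by
          exact_mod_cast mul_card_bound gen R F B hR
        have h3 : (mn:ℝ) ≤ ((F.card : ℝ) + ((bdry gen R (F : Set G)).ncard : ℝ)) / r := by
          refine h1.trans ?_
          gcongr
        have heq : ((F.card : ℝ) + ((bdry gen R (F : Set G)).ncard : ℝ)) / r / F.card
            = (1 + rho gen R F) / r := by
          have hFne0 : ((F.card : ℕ) : ℝ) ≠ 0 := ne_of_gt hFpos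
          rw [rho, div_div, mul_comm (r:ℝ) ((F.card : ℕ) : ℝ), ← div_div, add_div,
            div_self hFne0]
        calc (mn:ℝ) / F.card ≤ ((F.card : ℝ) + ((bdry gen R (F : Set G)).ncard : ℝ)) / r / F.card := by
              gcongr
          _ = (1 + rho gen R F) / r := heq
      have hlog2 : (0:ℝ) ≤ Real.log 2 := Real.log_nonneg (by norm_num)
      calc Real.log ((proj (Qp Q) F).ncard) / F.card
          ≤ (Real.log ((proj Q F).ncard) + mn * Real.log 2) / F.card := by gcongr
        _ = Real.log ((proj Q F).ncard) / F.card + ((mn:ℝ) / F.card) * Real.log 2 := by ring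
        _ ≤ Real.log ((proj Q F).ncard) / F.card + ((1 + rho gen R F) / r) * Real.log 2 := by
            gcongr
    have hlim2 : Tendsto (fun n => Real.log ((proj Q (Fn n)).ncard) / (Fn n).card +
        ((1 + rho gen R (Fn n)) / r) * Real.log 2) atTop
        (nhds (hq + ((1 + 0) / r) * Real.log 2)) := by
      refine hqlim.add ?_
      exact ((((tendsto_const_nhds (x := (1:ℝ)) (f := atTop)).add (hFol R))).div_const _).mul_const _
    have hfinal := le_of_tendsto_of_tendsto' hqplim hlim2 key
    have hstep : ((1 + 0) / (r:ℝ)) * Real.log 2 ≤ (2 / r) * Real.log (3 * r) := by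
      have hl2 : Real.log 2 ≤ Real.log (3 * r) :=
        Real.log_le_log (by norm_num) (by nlinarith)
      calc ((1 + 0) / (r:ℝ)) * Real.log 2 = Real.log 2 / r := by ring
        _ ≤ (2 * Real.log (3 * r)) / r := by gcongr; linarith
        _ = (2 / r) * Real.log (3 * r) := by ring
    linarith
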